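/- Let g : ℝ^{d_β}×ℝ^{d_π} → ℝ^{d_g} be continuously differentiable near (β_0,π_0) with derivative [G_β, G_π], let Θ = {(β,π) : g(β,π) ≤ 0}, and let (β_n,π_n) ∈ Θ with (β_n,π_n) → (β_0,π_0). Let a_n → ∞ with a_n/√n → 0 and suppose a_n · g(β_n,π_n) → b componentwise with b ∈ [−∞,0]^{d_g}, and there exists λ̃ ∈ B^{SS} = {λ ∈ ℝ^{d_β} : b + G_β(β_0,π_0)λ ≤ 0} with e_j'b + e_j'G_β(β_0,π_0)λ̃ < 0 for every j with b_j > −∞. Then the sets Λ_n^{SS} = {(a_n(β−β_n), √n(π−π_n)) : (β,π) ∈ Θ} converge in the Painlevé–Kuratowski sense to B^{SS} × ℝ^{d_π}. -/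

import Mathlib

open Filter Topology Set Metric

/-- The Painlevé–Kuratowski limsup of a sequence of sets:
points whose distance to `A n` has liminf zero. -/
def pkLimsup {H : Type*} [PseudoEMetricSpace H] (A : ℕ → Set H) : Set H :=
  {h | Filter.atTop.liminf (fun n => EMetric.infEdist h (A n)) = 0}

/-- The Painlevé–Kuratowski liminf of a sequence of sets:
points whose distance to `A n` tends to zero. -/
def pkLiminf {H : Type*} [PseudoEMetricSpace H] (A : ℕ → Set H) : Set H :=
  {h | Tendsto (fun n => EMetric.infEdist h (A n)) atTop (𝓝 0)}

/-- Painlevé–Kuratowski convergence: limsup and liminf both equal the limit set. -/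
def PKTendsto {H : Type*} [PseudoEMetricSpace H] (A : ℕ → Set H) (L : Set H) : Prop :=
  pkLimsup A = L ∧ pkLiminf A = L

lemma sqrt_nat_tendsto : Tendsto (fun n : ℕ => Real.sqrt n) atTop atTop := by
  rw [Filter.tendsto_atTop]
  intro c
  filter_upwards [eventually_ge_atTop ⌈c ^ 2⌉₊] with n hn
  have h1 : c ^ 2 ≤ (n : ℝ) := le_trans (Nat.le_ceil _) (by exact_mod_cast hn)
  calc c ≤ |c| := le_abs_self c
    _ = Real.sqrt (c ^ 2) := (Real.sqrt_sq_eq_abs c).symm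
    _ ≤ Real.sqrt n := Real.sqrt_le_sqrt h1

lemma taylor_aux {E F : Type*} [NormedAddCommGroup E] [NormedSpace ℝ E]
    [NormedAddCommGroup F] [NormedSpace ℝ F]
    (g : E → F) (θ₀ : E) (U : Set E) (hU : IsOpen U) (hθ₀ : θ₀ ∈ U)
    (G : E → E →L[ℝ] F) (hderiv : ∀ θ ∈ U, HasFDerivAt g (G θ) θ)
    (hG : ContinuousOn G U) {ε : ℝ} (hε : 0 < ε) :
    ∃ δ > 0, ∀ x ∈ ball θ₀ δ, ∀ y ∈ ball θ₀ δ,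
      ‖g y - g x - G θ₀ (y - x)‖ ≤ ε * ‖y - x‖ := by
  have hca : ContinuousAt G θ₀ := hG.continuousAt (hU.mem_nhds hθ₀)
  rcases Metric.continuousAt_iff.mp hca ε hε with ⟨δ₁, hδ₁, hball⟩
  rcases Metric.isOpen_iff.mp hU θ₀ hθ₀ with ⟨δ₂, hδ₂, hsub⟩
  refine ⟨min δ₁ δ₂, lt_min hδ₁ hδ₂, ?_⟩
  intro x hx y hy
  have hsub' : ball θ₀ (min δ₁ δ₂) ⊆ U := (ball_subset_ball (min_le_right _ _)).trans hsub
  have key : ∀ z ∈ ball θ₀ (min δ₁ δ₂),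
      HasFDerivWithinAt (fun s => g s - G θ₀ s) (G z - G θ₀) (ball θ₀ (min δ₁ δ₂)) z :=
    fun z hz => ((hderiv z (hsub' hz)).sub ((G θ₀).hasFDerivAt)).hasFDerivWithinAt
  have bound : ∀ z ∈ ball θ₀ (min δ₁ δ₂), ‖G z - G θ₀‖ ≤ ε := by
    intro z hz
    have hz1 : dist z θ₀ < δ₁ := lt_of_lt_of_le (mem_ball.mp hz) (min_le_left _ _)
    have := hball hz1
    rw [dist_eq_norm] at this
    exact this.le
  have hmv := (convex_ball θ₀ (min δ₁ δ₂)).norm_image_sub_le_of_norm_hasFDerivWithin_le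
    key bound hx hy
  have heq : (fun s => g s - G θ₀ s) y - (fun s => g s - G θ₀ s) x
      = g y - g x - G θ₀ (y - x) := by
    simp only [map_sub]
    abel
  rwa [heq] at hmv

lemma remainder_aux {E F : Type*} [NormedAddCommGroup E] [NormedSpace ℝ E]
    [NormedAddCommGroup F] [NormedSpace ℝ F]
    (g : E → F) (θ₀ : E) (U : Set E) (hU : IsOpen U) (hθ₀ : θ₀ ∈ U)
    (G : E → E →L[ℝ] F) (hderiv : ∀ θ ∈ U, HasFDerivAt g (G θ) θ)
    (hG : ContinuousOn G U)
    (c : ℕ → ℝ) (hc : ∀ n, 0 ≤ c n) (x y : ℕ → E)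
    (hx : Tendsto x atTop (𝓝 θ₀)) (hy : Tendsto y atTop (𝓝 θ₀))
    (K : ℝ) (hK0 : 0 ≤ K) (hK : ∀ᶠ n in atTop, c n * ‖y n - x n‖ ≤ K) :
    Tendsto (fun n => c n • (g (y n) - g (x n) - G θ₀ (y n - x n))) atTop (𝓝 0) := by
  rw [NormedAddCommGroup.tendsto_nhds_zero]
  intro ε hε
  have hε'pos : 0 < ε / (2 * (K + 1)) := by positivity
  obtain ⟨δ, hδ, hTay⟩ := taylor_aux g θ₀ U hU hθ₀ G hderiv hG hε'pos
  filter_upwards [hx (Metric.ball_mem_nhds θ₀ hδ), hy (Metric.ball_mem_nhds θ₀ hδ), hK]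
    with n hxn hyn hKn
  have h1 : ‖g (y n) - g (x n) - G θ₀ (y n - x n)‖ ≤ ε / (2 * (K + 1)) * ‖y n - x n‖ :=
    hTay _ hxn _ hyn
  have h2 : ‖c n • (g (y n) - g (x n) - G θ₀ (y n - x n))‖
      = c n * ‖g (y n) - g (x n) - G θ₀ (y n - x n)‖ := by
    rw [norm_smul, Real.norm_of_nonneg (hc n)]
  rw [h2]
  calc c n * ‖g (y n) - g (x n) - G θ₀ (y n - x n)‖
      ≤ c n * (ε / (2 * (K + 1)) * ‖y n - x n‖) :=
        mul_le_mul_of_nonneg_left h1 (hc n)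
    _ = ε / (2 * (K + 1)) * (c n * ‖y n - x n‖) := by ring
    _ ≤ ε / (2 * (K + 1)) * K := mul_le_mul_of_nonneg_left hKn hε'pos.le
    _ < ε := by
        rw [div_mul_eq_mul_div, div_lt_iff₀ (by positivity)]
        nlinarith

/-- Semi-strong identification scaling of a parameter space defined by inequalities.
With `Θ = {(β,π) : g(β,π) ≤ 0}`, `g` C¹ near `(β₀,π₀)` with derivative `G`
(`G_β λ = G(λ,0)`), `a_n → ∞`, `a_n/√n → 0`, `a_n g(β_n,π_n) → b ∈ [−∞,0]^{d_g}`
componentwise (in `EReal`), and the constraint qualification holding for every `j`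
(automatic when `b_j = −∞`), the sets
`Λ_n^{SS} = {(a_n(β−β_n), √n(π−π_n)) : (β,π) ∈ Θ}` PK-converge to
`B^{SS} × ℝ^{d_π}` where `B^{SS} = {λ : b + G_β(β₀,π₀)λ ≤ 0}`. -/
theorem pk_semi_strong_scaling {dβ dπ dg : ℕ}
    (g : ((Fin dβ → ℝ) × (Fin dπ → ℝ)) → (Fin dg → ℝ))
    (β₀ : Fin dβ → ℝ) (π₀ : Fin dπ → ℝ)
    (U : Set ((Fin dβ → ℝ) × (Fin dπ → ℝ))) (hU : IsOpen U) (hθ₀U : (β₀, π₀) ∈ U)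
    (G : ((Fin dβ → ℝ) × (Fin dπ → ℝ)) →
      (((Fin dβ → ℝ) × (Fin dπ → ℝ)) →L[ℝ] (Fin dg → ℝ)))
    (hderiv : ∀ θ ∈ U, HasFDerivAt g (G θ) θ)
    (hGcont : ContinuousOn G U)
    (βn : ℕ → (Fin dβ → ℝ)) (πn : ℕ → (Fin dπ → ℝ))
    (hθnΘ : ∀ n, ∀ j, g (βn n, πn n) j ≤ 0)
    (hθn : Tendsto (fun n => (βn n, πn n)) atTop (𝓝 (β₀, π₀)))
    (a : ℕ → ℝ) (ha_pos : ∀ n, 0 < a n)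
    (ha_inf : Tendsto a atTop atTop)
    (ha_slow : Tendsto (fun n : ℕ => a n / Real.sqrt n) atTop (𝓝 0))
    (b : Fin dg → EReal) (hb_le : ∀ j, b j ≤ 0)
    (hb : ∀ j, Tendsto (fun n : ℕ => ((a n * g (βn n, πn n) j : ℝ) : EReal)) atTop (𝓝 (b j)))
    (hCQ : ∃ lam : Fin dβ → ℝ,
      (∀ j, b j + ((G (β₀, π₀) (lam, 0) j : ℝ) : EReal) ≤ 0) ∧
      (∀ j, b j + ((G (β₀, π₀) (lam, 0) j : ℝ) : EReal) < 0)) :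
    PKTendsto
      (fun n : ℕ =>
        {p : (Fin dβ → ℝ) × (Fin dπ → ℝ) |
          ∃ q : (Fin dβ → ℝ) × (Fin dπ → ℝ), (∀ j, g q j ≤ 0) ∧
            p = (a n • (q.1 - βn n), Real.sqrt n • (q.2 - πn n))})
      ({lam : Fin dβ → ℝ | ∀ j, b j + ((G (β₀, π₀) (lam, 0) j : ℝ) : EReal) ≤ 0}
        ×ˢ (Set.univ : Set (Fin dπ → ℝ))) := by
  classical
  obtain ⟨lt', hlt1, hlt2⟩ := hCQ
  have ha_ne : ∀ n, a n ≠ 0 := fun n => (ha_pos n).ne'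
  have hb_ne_top : ∀ j, b j ≠ ⊤ := by
    intro j h
    have := hb_le j
    rw [h] at this
    exact absurd this (by simp)
  set θ₀ : (Fin dβ → ℝ) × (Fin dπ → ℝ) := (β₀, π₀) with hθ₀def
  set Λ : ℕ → Set ((Fin dβ → ℝ) × (Fin dπ → ℝ)) :=
    fun n : ℕ =>
      {p : (Fin dβ → ℝ) × (Fin dπ → ℝ) |
        ∃ q : (Fin dβ → ℝ) × (Fin dπ → ℝ), (∀ j, g q j ≤ 0) ∧
          p = (a n • (q.1 - βn n), Real.sqrt n • (q.2 - πn n))} with hΛdef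
  -- Part 2: limsup ⊆ L
  have key2 : ∀ (lam : Fin dβ → ℝ) (v : Fin dπ → ℝ),
      atTop.liminf (fun n => EMetric.infEdist
        ((lam, v) : (Fin dβ → ℝ) × (Fin dπ → ℝ)) (Λ n)) = 0 →
      ∀ j, b j + ((G θ₀ (lam, 0) j : ℝ) : EReal) ≤ 0 := by
    intro lam v hlim
    have hfreq : ∀ k : ℕ, ∃ᶠ n in atTop, ∃ q : (Fin dβ → ℝ) × (Fin dπ → ℝ),
        (∀ j, g q j ≤ 0) ∧
        dist ((lam, v) : (Fin dβ → ℝ) × (Fin dπ → ℝ))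
          (a n • (q.1 - βn n), Real.sqrt n • (q.2 - πn n)) < 1 / (k + 1) := by
      intro k
      have hkpos : (0:ℝ) < 1 / ((k:ℝ) + 1) := by positivity
      by_contra hcon
      rw [not_frequently] at hcon
      have hev : ∀ᶠ n in atTop,
          ENNReal.ofReal (1 / ((k:ℝ) + 1)) ≤ EMetric.infEdist
            ((lam, v) : (Fin dβ → ℝ) × (Fin dπ → ℝ)) (Λ n) := by
        filter_upwards [hcon] with n hn
        by_contra hlt'
        push_neg at hlt'
        rcases EMetric.infEdist_lt_iff.mp hlt' with ⟨p', hp', hd⟩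
        simp only [hΛdef, Set.mem_setOf_eq] at hp'
        rcases hp' with ⟨q, hq, rfl⟩
        exact hn ⟨q, hq, edist_lt_ofReal.mp hd⟩
      have hle := Filter.le_liminf_of_le (by isBoundedDefault) hev
      rw [hlim] at hle
      exact absurd hle (ENNReal.ofReal_pos.mpr hkpos).not_ge
    obtain ⟨φ, hφmono, hφ⟩ := Filter.extraction_forall_of_frequently hfreq
    choose q hqΘ hqd using hφ
    have hφat : Tendsto φ atTop atTop := hφmono.tendsto_atTop
    have haφ : Tendsto (fun k => a (φ k)) atTop atTop := ha_inf.comp hφat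
    have hsφ : Tendsto (fun k => Real.sqrt (φ k)) atTop atTop := sqrt_nat_tendsto.comp hφat
    have hθφ : Tendsto (fun k => (βn (φ k), πn (φ k))) atTop (𝓝 θ₀) := hθn.comp hφat
    set u : ℕ → (Fin dβ → ℝ) × (Fin dπ → ℝ) :=
      fun k => (a (φ k) • ((q k).1 - βn (φ k)), Real.sqrt (φ k) • ((q k).2 - πn (φ k)))
      with hu
    have hu_t : Tendsto u atTop (𝓝 (lam, v)) := by
      rw [tendsto_iff_dist_tendsto_zero]
      refine squeeze_zero (fun k => dist_nonneg) (fun k => ?_)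
        tendsto_one_div_add_atTop_nhds_zero_nat
      rw [dist_comm]
      exact (hqd k).le
    have hu1 : Tendsto (fun k => (u k).1) atTop (𝓝 lam) := (continuous_fst.tendsto _).comp hu_t
    have hu2 : Tendsto (fun k => (u k).2) atTop (𝓝 v) := (continuous_snd.tendsto _).comp hu_t
    have hainv : Tendsto (fun k => (a (φ k))⁻¹) atTop (𝓝 0) := tendsto_inv_atTop_zero.comp haφ
    have hsinv : Tendsto (fun k => (Real.sqrt (φ k))⁻¹) atTop (𝓝 0) :=
      tendsto_inv_atTop_zero.comp hsφ
    have hq1 : Tendsto (fun k => (q k).1) atTop (𝓝 β₀) := by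
      have heq : ∀ k, (q k).1 = βn (φ k) + (a (φ k))⁻¹ • (u k).1 := by
        intro k
        have h : (a (φ k))⁻¹ • (u k).1 = (q k).1 - βn (φ k) := by
          simp only [hu]
          exact inv_smul_smul₀ (ha_ne (φ k)) _
        rw [h]
        abel
      have h2 : Tendsto (fun k => βn (φ k) + (a (φ k))⁻¹ • (u k).1) atTop
          (𝓝 (β₀ + (0:ℝ) • lam)) :=
        ((continuous_fst.tendsto _).comp hθφ).add (hainv.smul hu1)
      rw [zero_smul, add_zero] at h2
      exact h2.congr fun k => (heq k).symm
    have hq2 : Tendsto (fun k => (q k).2) atTop (𝓝 π₀) := by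
      have hsq : ∀ᶠ k in atTop, (q k).2 = πn (φ k) + (Real.sqrt (φ k))⁻¹ • (u k).2 := by
        filter_upwards [eventually_ge_atTop 1] with k hk
        have hφ1 : 1 ≤ φ k := le_trans hk hφmono.le_apply
        have hs : Real.sqrt (φ k) ≠ 0 := by
          have h0 : (0:ℝ) < (φ k : ℝ) := by exact_mod_cast hφ1
          exact (Real.sqrt_pos.mpr h0).ne'
        have h : (Real.sqrt (φ k))⁻¹ • (u k).2 = (q k).2 - πn (φ k) := by
          simp only [hu]
          exact inv_smul_smul₀ hs _
        rw [h]
        abel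
      have h2 : Tendsto (fun k => πn (φ k) + (Real.sqrt (φ k))⁻¹ • (u k).2) atTop
          (𝓝 (π₀ + (0:ℝ) • v)) :=
        ((continuous_snd.tendsto _).comp hθφ).add (hsinv.smul hu2)
      rw [zero_smul, add_zero] at h2
      exact h2.congr' (hsq.mono fun k hk => hk.symm)
    have hq_t : Tendsto q atTop (𝓝 θ₀) := hq1.prodMk_nhds hq2
    set w : ℕ → (Fin dβ → ℝ) × (Fin dπ → ℝ) :=
      fun k => a (φ k) • (q k - (βn (φ k), πn (φ k))) with hw
    have hw2 : ∀ᶠ k in atTop, (w k).2 = (a (φ k) / Real.sqrt (φ k)) • (u k).2 := by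
      filter_upwards [eventually_ge_atTop 1] with k hk
      have hφ1 : 1 ≤ φ k := le_trans hk hφmono.le_apply
      have hs : Real.sqrt (φ k) ≠ 0 := by
        have h0 : (0:ℝ) < (φ k : ℝ) := by exact_mod_cast hφ1
        exact (Real.sqrt_pos.mpr h0).ne'
      have h : (a (φ k) / Real.sqrt (φ k)) • (Real.sqrt (φ k) • ((q k).2 - πn (φ k)))
          = a (φ k) • ((q k).2 - πn (φ k)) := by
        rw [smul_smul, div_mul_cancel₀ _ hs]
      exact h.symm
    have hw_t : Tendsto w atTop (𝓝 (lam, (0 : Fin dπ → ℝ))) := by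
      have h1 : Tendsto (fun k => (w k).1) atTop (𝓝 lam) := hu1
      have h2 : Tendsto (fun k => (w k).2) atTop (𝓝 (0 : Fin dπ → ℝ)) := by
        have h3 : Tendsto (fun k => (a (φ k) / Real.sqrt (φ k)) • (u k).2) atTop
            (𝓝 ((0:ℝ) • v)) := (ha_slow.comp hφat).smul hu2
        rw [zero_smul] at h3
        exact h3.congr' (hw2.mono fun k hk => hk.symm)
      exact h1.prodMk_nhds h2
    have hr : Tendsto (fun k => a (φ k) • (g (q k) - g (βn (φ k), πn (φ k))
        - G θ₀ (q k - (βn (φ k), πn (φ k))))) atTop (𝓝 0) := by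
      apply remainder_aux g θ₀ U hU hθ₀U G hderiv hGcont _ (fun k => (ha_pos (φ k)).le)
        _ _ hθφ hq_t (‖((lam, (0 : Fin dπ → ℝ)) : (Fin dβ → ℝ) × (Fin dπ → ℝ))‖ + 1)
        (by positivity)
      have hb' : ∀ k, a (φ k) * ‖q k - (βn (φ k), πn (φ k))‖ = ‖w k‖ := by
        intro k
        simp only [hw]
        rw [norm_smul, Real.norm_of_nonneg (ha_pos (φ k)).le]
      filter_upwards [hw_t.norm.eventually_le_const (lt_add_one _)] with k hk
      rw [hb' k]
      exact hk
    intro j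
    have hS : Tendsto (fun k => G θ₀ (w k) j
        + (a (φ k) • (g (q k) - g (βn (φ k), πn (φ k))
          - G θ₀ (q k - (βn (φ k), πn (φ k))))) j) atTop
        (𝓝 (G θ₀ ((lam, (0 : Fin dπ → ℝ))) j + 0)) := by
      apply Tendsto.add
      · exact ((continuous_apply j).tendsto _).comp (((G θ₀).continuous.tendsto _).comp hw_t)
      · have := ((continuous_apply j).tendsto _).comp hr
        simpa [Function.comp_def] using this
    rw [add_zero] at hS
    have hid : ∀ k, a (φ k) * g (q k) j
        = a (φ k) * g (βn (φ k), πn (φ k)) j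
          + (G θ₀ (w k) j + (a (φ k) • (g (q k) - g (βn (φ k), πn (φ k))
            - G θ₀ (q k - (βn (φ k), πn (φ k))))) j) := by
      intro k
      have h1 : G θ₀ (w k) = a (φ k) • G θ₀ (q k - (βn (φ k), πn (φ k))) := by
        simp only [hw]
        rw [map_smul]
      rw [h1]
      simp only [Pi.smul_apply, Pi.sub_apply, smul_eq_mul]
      ring
    have hA : Tendsto (fun k => ((a (φ k) * g (βn (φ k), πn (φ k)) j : ℝ) : EReal)) atTop
        (𝓝 (b j)) := (hb j).comp hφat
    have hneg : ∀ k, a (φ k) * g (q k) j ≤ 0 :=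
      fun k => mul_nonpos_of_nonneg_of_nonpos (ha_pos (φ k)).le (hqΘ k j)
    rcases eq_or_ne (b j) ⊥ with hbj | hbj
    · rw [hbj]
      simp
    · have hbt : b j ≠ ⊤ := hb_ne_top j
      have hbr : b j = (((b j).toReal : ℝ) : EReal) := (EReal.coe_toReal hbt hbj).symm
      rw [hbr] at hA ⊢
      have hA' : Tendsto (fun k => a (φ k) * g (βn (φ k), πn (φ k)) j) atTop
          (𝓝 (b j).toReal) := EReal.tendsto_coe.mp hA
      have hsum := hA'.add hS
      have hle : (b j).toReal + G θ₀ ((lam, (0 : Fin dπ → ℝ))) j ≤ 0 :=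
        le_of_tendsto hsum (Eventually.of_forall fun k => by
          rw [← hid k]; exact hneg k)
      rw [← EReal.coe_add]
      exact_mod_cast hle
  -- Part 1: L ⊆ liminf
  have key1 : ∀ (lam : Fin dβ → ℝ) (v : Fin dπ → ℝ),
      (∀ j, b j + ((G θ₀ (lam, 0) j : ℝ) : EReal) ≤ 0) →
      Tendsto (fun n => EMetric.infEdist
        ((lam, v) : (Fin dβ → ℝ) × (Fin dπ → ℝ)) (Λ n)) atTop (𝓝 0) := by
    intro lam v hlam
    have main : ∀ t : ℝ, 0 < t → t ≤ 1 → ∀ᶠ n in atTop,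
        EMetric.infEdist ((lam, v) : (Fin dβ → ℝ) × (Fin dπ → ℝ)) (Λ n)
          ≤ ENNReal.ofReal (t * ‖lt' - lam‖) := by
      intro t ht0 ht1
      set lamt : Fin dβ → ℝ := lam + t • (lt' - lam) with hlamt
      set qn : ℕ → (Fin dβ → ℝ) × (Fin dπ → ℝ) :=
        fun n => (βn n + (a n)⁻¹ • lamt, πn n + (Real.sqrt n)⁻¹ • v) with hqn
      set wn : ℕ → (Fin dβ → ℝ) × (Fin dπ → ℝ) :=
        fun n => (lamt, (a n / Real.sqrt n) • v) with hwn
      have hwn_t : Tendsto wn atTop (𝓝 (lamt, (0 : Fin dπ → ℝ))) := by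
        have h2 : Tendsto (fun n : ℕ => (a n / Real.sqrt n) • v) atTop (𝓝 ((0:ℝ) • v)) :=
          ha_slow.smul_const v
        rw [zero_smul] at h2
        exact tendsto_const_nhds.prodMk_nhds h2
      have hqθ : ∀ n : ℕ, qn n - (βn n, πn n)
          = ((a n)⁻¹ • lamt, (Real.sqrt n)⁻¹ • v) := by
        intro n
        have h : qn n - (βn n, πn n)
            = ((βn n + (a n)⁻¹ • lamt) - βn n, (πn n + (Real.sqrt n)⁻¹ • v) - πn n) := rfl
        rw [h]
        congr 1 <;> abel
      have hwq : ∀ n : ℕ, 1 ≤ n → a n • (qn n - (βn n, πn n)) = wn n := by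
        intro n hn
        have hs : Real.sqrt n ≠ 0 := by
          have h0 : (0:ℝ) < (n : ℝ) := by exact_mod_cast hn
          exact (Real.sqrt_pos.mpr h0).ne'
        have h1 : a n • ((a n)⁻¹ • lamt) = lamt := smul_inv_smul₀ (ha_ne n) _
        have h2 : a n • ((Real.sqrt n)⁻¹ • v) = (a n / Real.sqrt n) • v := by
          rw [smul_smul, div_eq_mul_inv]
        simp only [hwn]
        rw [hqθ n, Prod.smul_mk, h1, h2]
      have hqn_t : Tendsto qn atTop (𝓝 θ₀) := by
        have h1 : Tendsto (fun n => βn n + (a n)⁻¹ • lamt) atTop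
            (𝓝 (β₀ + (0:ℝ) • lamt)) :=
          ((continuous_fst.tendsto _).comp hθn).add
            ((tendsto_inv_atTop_zero.comp ha_inf).smul_const _)
        have h2 : Tendsto (fun n : ℕ => πn n + (Real.sqrt n)⁻¹ • v) atTop
            (𝓝 (π₀ + (0:ℝ) • v)) :=
          ((continuous_snd.tendsto _).comp hθn).add
            ((tendsto_inv_atTop_zero.comp sqrt_nat_tendsto).smul_const _)
        rw [zero_smul, add_zero] at h1 h2
        exact h1.prodMk_nhds h2
      have hrn : Tendsto (fun n => a n • (g (qn n) - g (βn n, πn n)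
          - G θ₀ (qn n - (βn n, πn n)))) atTop (𝓝 0) := by
        apply remainder_aux g θ₀ U hU hθ₀U G hderiv hGcont a (fun n => (ha_pos n).le)
          _ _ hθn hqn_t (‖((lamt, (0 : Fin dπ → ℝ)) : (Fin dβ → ℝ) × (Fin dπ → ℝ))‖ + 1)
          (by positivity)
        filter_upwards [hwn_t.norm.eventually_le_const (lt_add_one _),
          eventually_ge_atTop 1] with n h1 h2
        rw [show a n * ‖qn n - (βn n, πn n)‖ = ‖wn n‖ by
          rw [← hwq n h2, norm_smul, Real.norm_of_nonneg (ha_pos n).le]]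
        exact h1
      have hGdec : ∀ j, G θ₀ ((lamt, (0 : Fin dπ → ℝ))) j
          = G θ₀ ((lam, (0 : Fin dπ → ℝ))) j
            + t * (G θ₀ ((lt', (0 : Fin dπ → ℝ))) j - G θ₀ ((lam, (0 : Fin dπ → ℝ))) j) := by
        intro j
        have hpt : ((lamt, (0 : Fin dπ → ℝ)) : (Fin dβ → ℝ) × (Fin dπ → ℝ))
            = (lam, (0 : Fin dπ → ℝ))
              + t • ((lt', (0 : Fin dπ → ℝ)) - (lam, (0 : Fin dπ → ℝ))) := by
          apply Prod.ext
          · simp [hlamt]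
          · simp
        rw [hpt, map_add, map_smul, map_sub]
        simp [smul_eq_mul]
      have hstrict : ∀ j, b j + ((G θ₀ ((lamt, (0 : Fin dπ → ℝ))) j : ℝ) : EReal) < 0 := by
        intro j
        rcases eq_or_ne (b j) ⊥ with hbj | hbj
        · rw [hbj, EReal.bot_add]
          exact bot_lt_iff_ne_bot.mpr (by simp)
        · have hbt : b j ≠ ⊤ := hb_ne_top j
          have hbr : b j = (((b j).toReal : ℝ) : EReal) := (EReal.coe_toReal hbt hbj).symm
          have h1 : (b j).toReal + G θ₀ ((lam, (0 : Fin dπ → ℝ))) j ≤ 0 := by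
            have h := hlam j
            rw [hbr, ← EReal.coe_add] at h
            exact_mod_cast h
          have h2 : (b j).toReal + G θ₀ ((lt', (0 : Fin dπ → ℝ))) j < 0 := by
            have h := hlt2 j
            rw [hbr, ← EReal.coe_add] at h
            exact_mod_cast h
          have hx : (1 - t) * ((b j).toReal + G θ₀ ((lam, (0 : Fin dπ → ℝ))) j) ≤ 0 :=
            mul_nonpos_of_nonneg_of_nonpos (by linarith) h1
          have hy : t * ((b j).toReal + G θ₀ ((lt', (0 : Fin dπ → ℝ))) j) < 0 :=
            mul_neg_of_pos_of_neg ht0 h2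
          have h3 : (b j).toReal + G θ₀ ((lamt, (0 : Fin dπ → ℝ))) j < 0 := by
            rw [hGdec j]
            nlinarith [hx, hy]
          rw [hbr, ← EReal.coe_add]
          exact_mod_cast h3
      have hgj : ∀ j, ∀ᶠ n in atTop, g (qn n) j ≤ 0 := by
        intro j
        have hBn : Tendsto (fun n => G θ₀ (wn n) j) atTop
            (𝓝 (G θ₀ ((lamt, (0 : Fin dπ → ℝ))) j)) :=
          ((continuous_apply j).tendsto _).comp (((G θ₀).continuous.tendsto _).comp hwn_t)
        have hRn : Tendsto (fun n => (a n • (g (qn n) - g (βn n, πn n)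
            - G θ₀ (qn n - (βn n, πn n)))) j) atTop (𝓝 0) := by
          have h := ((continuous_apply j).tendsto _).comp hrn
          simpa [Function.comp_def] using h
        have hid : ∀ n : ℕ, 1 ≤ n → a n * g (qn n) j
            = a n * g (βn n, πn n) j + (G θ₀ (wn n) j
              + (a n • (g (qn n) - g (βn n, πn n) - G θ₀ (qn n - (βn n, πn n)))) j) := by
          intro n hn
          have h1 : G θ₀ (wn n) = a n • G θ₀ (qn n - (βn n, πn n)) := by
            rw [← hwq n hn, map_smul]
          rw [h1]
          simp only [Pi.smul_apply, Pi.sub_apply, smul_eq_mul]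
          ring
        rcases eq_or_ne (b j) ⊥ with hbj | hbj
        · have hAbot : Tendsto (fun n => a n * g (βn n, πn n) j) atTop atBot := by
            rw [tendsto_atBot]
            intro x
            have h := hb j
            rw [hbj, EReal.tendsto_nhds_bot_iff_real] at h
            filter_upwards [h x] with n hn
            exact (EReal.coe_lt_coe_iff.mp hn).le
          have hsum := hAbot.atBot_add (hBn.add hRn)
          filter_upwards [tendsto_atBot.mp hsum (-1), eventually_ge_atTop 1] with n h1 h2
          have h3 : a n * g (qn n) j ≤ -1 := by
            rw [hid n h2]; exact h1
          by_contra hg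
          push_neg at hg
          nlinarith [ha_pos n, mul_pos (ha_pos n) hg]
        · have hbt : b j ≠ ⊤ := hb_ne_top j
          have hbr : b j = (((b j).toReal : ℝ) : EReal) := (EReal.coe_toReal hbt hbj).symm
          have hA' : Tendsto (fun n => a n * g (βn n, πn n) j) atTop (𝓝 (b j).toReal) := by
            have h := hb j
            rw [hbr] at h
            exact EReal.tendsto_coe.mp h
          have hrc : (b j).toReal + G θ₀ ((lamt, (0 : Fin dπ → ℝ))) j < 0 := by
            have h := hstrict j
            rw [hbr, ← EReal.coe_add] at h
            exact_mod_cast h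
          have hsum := hA'.add (hBn.add hRn)
          rw [add_zero] at hsum
          filter_upwards [hsum.eventually_lt_const hrc, eventually_ge_atTop 1] with n h1 h2
          have h3 : a n * g (qn n) j < 0 := by
            rw [hid n h2]; exact h1
          by_contra hg
          push_neg at hg
          nlinarith [mul_pos (ha_pos n) hg]
      have hmem : ∀ᶠ n in atTop,
          ((lamt, v) : (Fin dβ → ℝ) × (Fin dπ → ℝ)) ∈ Λ n := by
        filter_upwards [eventually_all.2 hgj, eventually_ge_atTop 1] with n hΘn hn1
        have hs : Real.sqrt n ≠ 0 := by
          have h0 : (0:ℝ) < (n : ℝ) := by exact_mod_cast hn1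
          exact (Real.sqrt_pos.mpr h0).ne'
        simp only [hΛdef, Set.mem_setOf_eq]
        refine ⟨qn n, hΘn, ?_⟩
        have e1 : (qn n).1 - βn n = (a n)⁻¹ • lamt := by
          simp only [hqn]
          abel
        have e2 : (qn n).2 - πn n = (Real.sqrt n)⁻¹ • v := by
          simp only [hqn]
          abel
        rw [e1, e2, smul_inv_smul₀ (ha_ne n), smul_inv_smul₀ hs]
      filter_upwards [hmem] with n hn
      calc EMetric.infEdist ((lam, v) : (Fin dβ → ℝ) × (Fin dπ → ℝ)) (Λ n)
          ≤ edist ((lam, v) : (Fin dβ → ℝ) × (Fin dπ → ℝ)) ((lamt, v)) :=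
            EMetric.infEdist_le_edist_of_mem hn
        _ ≤ ENNReal.ofReal (t * ‖lt' - lam‖) := by
            rw [edist_dist]
            apply ENNReal.ofReal_le_ofReal
            rw [Prod.dist_eq]
            simp only [dist_self]
            rw [max_eq_left dist_nonneg, dist_eq_norm]
            have h : lam - lamt = -(t • (lt' - lam)) := by
              simp only [hlamt]
              abel
            rw [h, norm_neg, norm_smul, Real.norm_of_nonneg ht0.le]
    rw [ENNReal.tendsto_nhds_zero]
    intro ε hε
    obtain ⟨e, he, hee⟩ : ∃ e : ℝ, 0 < e ∧ ENNReal.ofReal e ≤ ε := by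
      rcases eq_or_ne ε ⊤ with rfl | hne
      · exact ⟨1, one_pos, le_top⟩
      · exact ⟨ε.toReal, ENNReal.toReal_pos hε.ne' hne, (ENNReal.ofReal_toReal hne).le⟩
    have hC : (0:ℝ) ≤ ‖lt' - lam‖ := norm_nonneg _
    have ht0 : 0 < min 1 (e / (‖lt' - lam‖ + 1)) := lt_min one_pos (by positivity)
    have ht1 : min 1 (e / (‖lt' - lam‖ + 1)) ≤ 1 := min_le_left _ _
    have htC : min 1 (e / (‖lt' - lam‖ + 1)) * ‖lt' - lam‖ ≤ e := by
      have h1 : min 1 (e / (‖lt' - lam‖ + 1)) ≤ e / (‖lt' - lam‖ + 1) := min_le_right _ _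
      calc min 1 (e / (‖lt' - lam‖ + 1)) * ‖lt' - lam‖
          ≤ (e / (‖lt' - lam‖ + 1)) * ‖lt' - lam‖ := mul_le_mul_of_nonneg_right h1 hC
        _ ≤ e := by
            rw [div_mul_eq_mul_div, div_le_iff₀ (by positivity)]
            nlinarith
    filter_upwards [main _ ht0 ht1] with n hn
    exact hn.trans ((ENNReal.ofReal_le_ofReal htC).trans hee)
  -- Assembly
  constructor
  · ext p
    simp only [pkLimsup, Set.mem_setOf_eq, Set.mem_prod, Set.mem_univ, and_true]
    constructor
    · intro hp
      exact key2 p.1 p.2 hp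
    · intro hp
      exact (key1 p.1 p.2 hp).liminf_eq
  · ext p
    simp only [pkLiminf, Set.mem_setOf_eq, Set.mem_prod, Set.mem_univ, and_true]
    constructor
    · intro hp
      exact key2 p.1 p.2 hp.liminf_eq
    · intro hp
      exact key1 p.1 p.2 hp
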